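/- Fix θ ∈ ℝ and t ≥ 0, and set λ₁ = e^{−2t sin²θ}, λ₂ = e^{−2t cos²θ}, λ₃ = e^{−2t}, m₃ = sin(2θ)(λ₃ − 1), a² = 1 + λ₃ + m₃, b² = 1 − λ₃ + m₃, c² = 1 − λ₃ − m₃, d² = 1 + λ₃ − m₃. Then the 4×4 complex matrix τ_θ = (1/4) · [[a², 0, 0, λ₁+λ₂], [0, b², λ₁−λ₂, 0], [0, λ₁−λ₂, c², 0], [λ₁+λ₂, 0, 0, d²]] is positive semidefinite. (This matrix is the Choi matrix of the quantum channel exp(t 𝓛_θ), and its positive semidefiniteness expresses complete positivity of the channel.) -/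

import Mathlib

open Matrix
open scoped ComplexOrder

private lemma sinh_mul_le_aux (c x : ℝ) (hc0 : 0 ≤ c) (hc1 : c ≤ 1) (hx : 0 ≤ x) :
    Real.sinh (c * x) ≤ c * Real.sinh x := by
  have hf : ∀ y : ℝ, HasDerivAt (fun y => c * Real.sinh y - Real.sinh (c * y))
      (c * Real.cosh y - Real.cosh (c * y) * c) y := by
    intro y
    exact ((Real.hasDerivAt_sinh y).const_mul c).sub
      (by simpa [Function.comp_def] using (Real.hasDerivAt_sinh (c * y)).comp y ((hasDerivAt_id y).const_mul c))
  have hmono : MonotoneOn (fun y => c * Real.sinh y - Real.sinh (c * y)) (Set.Ici 0) := by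
    apply monotoneOn_of_deriv_nonneg (convex_Ici 0)
    · exact Continuous.continuousOn (by fun_prop)
    · intro y hy
      exact (hf y).differentiableAt.differentiableWithinAt
    · intro y hy
      rw [(hf y).deriv]
      simp only [interior_Ici, Set.mem_Ioi] at hy
      have : Real.cosh (c * y) ≤ Real.cosh y := by
        rw [Real.cosh_le_cosh, abs_mul]
        calc |c| * |y| ≤ 1 * |y| := by
              apply mul_le_mul_of_nonneg_right _ (abs_nonneg y)
              rwa [abs_of_nonneg hc0]
          _ = |y| := one_mul _
      nlinarith
  have h0 : (fun y => c * Real.sinh y - Real.sinh (c * y)) 0 ≤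
      (fun y => c * Real.sinh y - Real.sinh (c * y)) x :=
    hmono (Set.self_mem_Ici) hx hx
  simp [Real.sinh_zero] at h0
  linarith

private lemma key0_aux (c t : ℝ) (hc0 : 0 ≤ c) (hc1 : c ≤ 1) (ht : 0 ≤ t) :
    Real.exp (-(2*t)) * (Real.exp (2*t*c) + Real.exp (-(2*t*c)))
      + (1 - c^2) * (1 - Real.exp (-(2*t)))^2 ≤ 1 + Real.exp (-(2*t))^2 := by
  set A := Real.exp (t*c) with hA
  set B := Real.exp (-(t*c)) with hB
  set R := Real.exp t with hR
  set S := Real.exp (-t) with hS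
  have hAB : A * B = 1 := by rw [hA, hB, ← Real.exp_add]; simp
  have hSR : S * R = 1 := by rw [hS, hR, ← Real.exp_add]; simp
  have hBA : B ≤ A := Real.exp_le_exp.2 (by nlinarith)
  have hsinh : A - B ≤ c * (R - S) := by
    have h := sinh_mul_le_aux c t hc0 hc1 ht
    rw [Real.sinh_eq, Real.sinh_eq] at h
    rw [mul_comm c t] at h
    rw [hA, hB, hR, hS]
    linarith [h]
  have hsq : (A - B)^2 ≤ (c * (R - S))^2 := by
    have h0 : 0 ≤ A - B := by linarith
    nlinarith
  have h6 : S * (R - S) = 1 - S^2 := by rw [mul_sub, hSR]; ring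
  have h7 : S^2 * (R - S)^2 = (1 - S^2)^2 := by rw [← h6]; ring
  have h5 : S^2 * (A - B)^2 ≤ c^2 * (1 - S^2)^2 := by
    nlinarith [mul_le_mul_of_nonneg_left hsq (sq_nonneg S), h7]
  have hE2 : Real.exp (-(2*t)) = S^2 := by rw [hS, sq, ← Real.exp_add]; ring_nf
  have hE3 : Real.exp (2*t*c) = A^2 := by rw [hA, sq, ← Real.exp_add]; ring_nf
  have hE4 : Real.exp (-(2*t*c)) = B^2 := by rw [hB, sq, ← Real.exp_add]; ring_nf
  rw [hE2, hE3, hE4]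
  nlinarith [h5, hAB]

private lemma key_aux (θ t : ℝ) (ht : 0 ≤ t) :
    Real.exp (-(2 * t * Real.sin θ ^ 2))^2 + Real.exp (-(2 * t * Real.cos θ ^ 2))^2
      + (Real.sin (2*θ) * (Real.exp (-(2*t)) - 1))^2 ≤ 1 + Real.exp (-(2*t))^2 := by
  set C := Real.cos (2*θ) with hCdef
  have hpyt := Real.sin_sq_add_cos_sq θ
  have hpyt2 := Real.sin_sq_add_cos_sq (2*θ)
  have hcos2 : C = 2 * Real.cos θ ^ 2 - 1 := Real.cos_two_mul θ
  have e1 : Real.exp (-(2 * t * Real.sin θ ^ 2))^2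
      = Real.exp (-(2*t)) * Real.exp (2*t*C) := by
    rw [sq, ← Real.exp_add, ← Real.exp_add, Real.exp_eq_exp]
    nlinarith [hcos2, hpyt]
  have e2 : Real.exp (-(2 * t * Real.cos θ ^ 2))^2
      = Real.exp (-(2*t)) * Real.exp (-(2*t*C)) := by
    rw [sq, ← Real.exp_add, ← Real.exp_add, Real.exp_eq_exp]
    nlinarith [hcos2, hpyt]
  have em : (Real.sin (2*θ) * (Real.exp (-(2*t)) - 1))^2
      = (1 - C^2) * (1 - Real.exp (-(2*t)))^2 := by
    have : Real.sin (2*θ)^2 = 1 - C^2 := by nlinarith [hpyt2]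
    nlinarith [this]
  set c := |C| with hcdef
  have hc0 : 0 ≤ c := abs_nonneg C
  have hc1 : c ≤ 1 := by rw [hcdef, hCdef]; exact Real.abs_cos_le_one _
  have hsum : Real.exp (2*t*C) + Real.exp (-(2*t*C))
      = Real.exp (2*t*c) + Real.exp (-(2*t*c)) := by
    rcases abs_cases C with ⟨h, _⟩ | ⟨h, _⟩
    · rw [hcdef, h]
    · rw [hcdef, h]
      rw [show 2*t*(-C) = -(2*t*C) by ring, neg_neg, add_comm]
  have hk := key0_aux c t hc0 hc1 ht
  have hcc : c^2 = C^2 := sq_abs C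
  rw [e1, e2, em]
  nlinarith [hk, hsum, hcc]

private lemma quad_nonneg_aux (A D C p q w : ℝ) (hA : 0 ≤ A) (hD : 0 ≤ D) (hp : 0 ≤ p)
    (hq : 0 ≤ q) (hC : C^2 ≤ A*D) (hw : w^2 ≤ p*q) : 0 ≤ A*p + D*q + 2*C*w := by
  rcases le_or_gt 0 (C*w) with h | h
  · nlinarith [mul_nonneg hA hp, mul_nonneg hD hq]
  · have hT : 0 ≤ A*p + D*q := by positivity
    have h4 : (C*w)^2 ≤ (A*D)*(p*q) := by
      calc (C*w)^2 = C^2 * w^2 := by ring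
        _ ≤ (A*D)*(p*q) := mul_le_mul hC hw (sq_nonneg w) (mul_nonneg hA hD)
    have h2 : (2*(C*w))^2 ≤ (A*p + D*q)^2 := by nlinarith [sq_nonneg (A*p - D*q)]
    have h5 : 0 < A*p + D*q - 2*(C*w) := by nlinarith
    nlinarith [h2, h5]

set_option maxHeartbeats 1600000 in
theorem choi_matrix_posSemidef (θ t : ℝ) (ht : 0 ≤ t)
    (lam1 lam2 lam3 m3 a2 b2 c2 d2 : ℝ)
    (h1 : lam1 = Real.exp (-(2 * t * Real.sin θ ^ 2)))
    (h2 : lam2 = Real.exp (-(2 * t * Real.cos θ ^ 2)))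
    (h3 : lam3 = Real.exp (-(2 * t)))
    (hm : m3 = Real.sin (2 * θ) * (lam3 - 1))
    (ha : a2 = 1 + lam3 + m3) (hb : b2 = 1 - lam3 + m3)
    (hc : c2 = 1 - lam3 - m3) (hd : d2 = 1 + lam3 - m3) :
    (((1 : ℂ) / 4) •
      !![(a2 : ℂ), 0, 0, ((lam1 + lam2 : ℝ) : ℂ);
         0, (b2 : ℂ), ((lam1 - lam2 : ℝ) : ℂ), 0;
         0, ((lam1 - lam2 : ℝ) : ℂ), (c2 : ℂ), 0;
         ((lam1 + lam2 : ℝ) : ℂ), 0, 0, (d2 : ℂ)]).PosSemidef := by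
  -- basic facts
  have hl3pos : 0 < lam3 := h3 ▸ Real.exp_pos _
  have hl31 : lam3 ≤ 1 := by rw [h3]; exact Real.exp_le_one_iff.mpr (by linarith)
  have hsin1 : Real.sin (2*θ) ≤ 1 := Real.sin_le_one _
  have hsin2 : -1 ≤ Real.sin (2*θ) := Real.neg_one_le_sin _
  have hmub : m3 ≤ 1 - lam3 := by rw [hm]; nlinarith
  have hmlb : -(1 - lam3) ≤ m3 := by rw [hm]; nlinarith
  have ha2 : 0 ≤ a2 := by rw [ha]; linarith
  have hb2 : 0 ≤ b2 := by rw [hb]; linarith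
  have hc2 : 0 ≤ c2 := by rw [hc]; linarith
  have hd2 : 0 ≤ d2 := by rw [hd]; linarith
  have hprod : lam1 * lam2 = lam3 := by
    rw [h1, h2, h3, ← Real.exp_add, Real.exp_eq_exp]
    nlinarith [Real.sin_sq_add_cos_sq θ]
  have hK : lam1^2 + lam2^2 + m3^2 ≤ 1 + lam3^2 := by
    rw [hm, h1, h2, h3]
    exact key_aux θ t ht
  have hP : (lam1 + lam2)^2 ≤ a2 * d2 := by
    rw [ha, hd]; nlinarith [hK, hprod]
  have hQ : (lam1 - lam2)^2 ≤ b2 * c2 := by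
    rw [hb, hc]; nlinarith [hK, hprod]
  rw [posSemidef_iff_dotProduct_mulVec]
  constructor
  · ext i j
    fin_cases i <;> fin_cases j <;>
      simp [Matrix.conjTranspose_apply, Complex.star_def, Complex.conj_ofReal]
  · intro x
    simp [Matrix.mulVec, dotProduct, Fin.sum_univ_four, Matrix.smul_apply]
    rw [Complex.le_def]
    constructor
    · simp [Complex.add_re, Complex.mul_re, Complex.div_re, Complex.add_im, Complex.mul_im]
      ring_nf
      have H1 := quad_nonneg_aux a2 d2 (lam1 + lam2)
        ((x 0).re^2 + (x 0).im^2) ((x 3).re^2 + (x 3).im^2)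
        ((x 0).re*(x 3).re + (x 0).im*(x 3).im) ha2 hd2 (by positivity) (by positivity)
        hP (by nlinarith [sq_nonneg ((x 0).re*(x 3).im - (x 3).re*(x 0).im)])
      have H2 := quad_nonneg_aux b2 c2 (lam1 - lam2)
        ((x 1).re^2 + (x 1).im^2) ((x 2).re^2 + (x 2).im^2)
        ((x 1).re*(x 2).re + (x 1).im*(x 2).im) hb2 hc2 (by positivity) (by positivity)
        hQ (by nlinarith [sq_nonneg ((x 1).re*(x 2).im - (x 2).re*(x 1).im)])
      nlinarith [H1, H2]
    · simp [Complex.add_im, Complex.mul_im, Complex.div_im, Complex.mul_re]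
      ring_nf
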